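/- arXiv:2401.15262 — 4 statements merged into one kernel-verified Lean document; each statement's English description precedes it below -/
import Mathlib

section
/- Let h : ℝ^d → ℝ be differentiable with uniformly continuous gradient, and let ‖·‖ be a norm on ℝ^d with dual norm ‖·‖_* . Then for every z ∈ ℝ^d, (max over Δ with ‖Δ‖ ≤ δ of h(z+Δ)) − h(z) − δ‖∇h(z)‖_* is o(δ) as δ → 0⁺, uniformly in z. In particular, for fixed z, lim_{δ→0⁺} (1/δ)·(sup_{‖Δ‖≤δ} h(z+Δ) − h(z)) = ‖∇h(z)‖_*. -/
open RealInnerProductSpace Filter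

/-- Dual norm of `y` with respect to the (semi)norm `p`, via the Euclidean pairing. -/
noncomputable def dualNorm {d : ℕ} (p : Seminorm ℝ (EuclideanSpace ℝ (Fin d)))
    (y : EuclideanSpace ℝ (Fin d)) : ℝ :=
  sSup {t | ∃ x, p x ≤ 1 ∧ t = ⟪x, y⟫}

lemma coord_le_norm {d : ℕ} (x : EuclideanSpace ℝ (Fin d)) (i : Fin d) : |x i| ≤ ‖x‖ := by
  rw [EuclideanSpace.norm_eq, ← Real.sqrt_sq_eq_abs]
  apply Real.sqrt_le_sqrt
  calc (x i)^2 = ‖x i‖^2 := by rw [Real.norm_eq_abs, sq_abs]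
    _ ≤ ∑ j, ‖x j‖^2 := Finset.single_le_sum (f := fun j => ‖x j‖^2)
        (fun j _ => by positivity) (Finset.mem_univ i)

lemma pnorm_le {d : ℕ} (p : Seminorm ℝ (EuclideanSpace ℝ (Fin d))) :
    ∃ C > 0, ∀ x, p x ≤ C * ‖x‖ := by
  refine ⟨(∑ i : Fin d, p (EuclideanSpace.single i 1)) + 1, by positivity, fun x => ?_⟩
  have hx : x = ∑ i : Fin d, (x i) • EuclideanSpace.single i (1:ℝ) := by
    have := (EuclideanSpace.basisFun (Fin d) ℝ).sum_repr x
    simp [EuclideanSpace.basisFun_repr, EuclideanSpace.basisFun_apply] at this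
    exact this.symm
  calc p x = p (∑ i : Fin d, (x i) • EuclideanSpace.single i (1:ℝ)) := by rw [← hx]
    _ ≤ ∑ i : Fin d, p ((x i) • EuclideanSpace.single i (1:ℝ)) :=
        Finset.le_sum_of_subadditive p (map_zero p).le (map_add_le_add p) _ _
    _ ≤ ∑ i : Fin d, p (EuclideanSpace.single i (1:ℝ)) * ‖x‖ := by
        refine Finset.sum_le_sum fun i _ => ?_
        rw [map_smul_eq_mul, mul_comm]
        exact mul_le_mul_of_nonneg_left
          ((Real.norm_eq_abs _ ▸ coord_le_norm x i)) (apply_nonneg p _)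
    _ = (∑ i : Fin d, p (EuclideanSpace.single i (1:ℝ))) * ‖x‖ := by rw [Finset.sum_mul]
    _ ≤ _ := by
        have h0 : (0:ℝ) ≤ ‖x‖ := norm_nonneg x
        nlinarith [Finset.sum_nonneg (fun i (_ : i ∈ Finset.univ) => apply_nonneg p (EuclideanSpace.single i (1:ℝ)))]

lemma pcont {d : ℕ} (p : Seminorm ℝ (EuclideanSpace ℝ (Fin d))) : Continuous p := by
  obtain ⟨C, hC, hle⟩ := pnorm_le p
  refine Metric.continuous_iff.mpr fun x ε hε => ⟨ε / C, by positivity, fun y hy => ?_⟩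
  rw [Real.dist_eq]
  calc |p y - p x| ≤ p (y - x) := abs_sub_map_le_sub p y x
    _ ≤ C * ‖y - x‖ := hle _
    _ < C * (ε / C) := by
        apply mul_lt_mul_of_pos_left _ hC
        rw [← dist_eq_norm]; exact hy
    _ = ε := by field_simp

lemma pnorm_ge {d : ℕ} (p : Seminorm ℝ (EuclideanSpace ℝ (Fin d)))
    (hp : ∀ x, p x = 0 → x = 0) : ∃ c > 0, ∀ x, c * ‖x‖ ≤ p x := by
  rcases Nat.eq_zero_or_pos d with hd | hd
  · subst hd
    refine ⟨1, one_pos, fun x => ?_⟩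
    have : x = 0 := by ext i; exact absurd i.2 (by omega)
    simp [this]
  haveI : Nontrivial (EuclideanSpace ℝ (Fin d)) :=
    ⟨0, EuclideanSpace.single ⟨0, hd⟩ 1, fun hcon => by
      have := congrArg norm hcon
      rw [norm_zero, EuclideanSpace.norm_single] at this
      norm_num at this⟩
  obtain ⟨x₀, hx₀, hmin⟩ := (isCompact_sphere (0 : EuclideanSpace ℝ (Fin d)) 1).exists_isMinOn
    (NormedSpace.sphere_nonempty.mpr zero_le_one) (pcont p).continuousOn
  have hx₀ne : x₀ ≠ 0 := by
    intro hcon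
    have := mem_sphere_zero_iff_norm.mp hx₀
    rw [hcon] at this; simp at this
  have hc : 0 < p x₀ := (apply_nonneg p x₀).lt_of_ne' (fun h0 => hx₀ne (hp _ h0))
  refine ⟨p x₀, hc, fun x => ?_⟩
  rcases eq_or_ne x 0 with rfl | hx
  · simp
  have hnx : (0:ℝ) < ‖x‖ := norm_pos_iff.mpr hx
  have hmem : ‖x‖⁻¹ • x ∈ Metric.sphere (0 : EuclideanSpace ℝ (Fin d)) 1 := by
    simp [norm_smul, abs_of_pos (inv_pos.mpr hnx), inv_mul_cancel₀ hnx.ne']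
  have := hmin hmem
  simp only [Set.mem_setOf_eq] at this
  have h2 : p (‖x‖⁻¹ • x) = ‖x‖⁻¹ * p x := by
    rw [map_smul_eq_mul]; simp [abs_of_pos (inv_pos.mpr hnx)]
  rw [h2] at this
  have := mul_le_mul_of_nonneg_left this hnx.le
  calc p x₀ * ‖x‖ = ‖x‖ * p x₀ := mul_comm _ _
    _ ≤ ‖x‖ * (‖x‖⁻¹ * p x) := this
    _ = p x := by field_simp

lemma ball_compact {d : ℕ} (p : Seminorm ℝ (EuclideanSpace ℝ (Fin d)))
    (hp : ∀ x, p x = 0 → x = 0) (r : ℝ) :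
    IsCompact {x : EuclideanSpace ℝ (Fin d) | p x ≤ r} := by
  obtain ⟨c, hc, hge⟩ := pnorm_ge p hp
  refine Metric.isCompact_of_isClosed_isBounded ?_ ?_
  · exact isClosed_le (pcont p) continuous_const
  · apply Bornology.IsBounded.subset (Metric.isBounded_closedBall (x := (0:EuclideanSpace ℝ (Fin d))) (r := r / c))
    intro x hx
    simp only [Set.mem_setOf_eq] at hx
    simp only [Metric.mem_closedBall, dist_zero_right]
    rw [le_div_iff₀ hc, mul_comm]
    exact (hge x).trans hx

lemma dn_isMax {d : ℕ} (p : Seminorm ℝ (EuclideanSpace ℝ (Fin d)))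
    (hp : ∀ x, p x = 0 → x = 0) (y : EuclideanSpace ℝ (Fin d)) :
    (∃ x, p x ≤ 1 ∧ dualNorm p y = ⟪x, y⟫) ∧
      ∀ x, p x ≤ 1 → ⟪x, y⟫ ≤ dualNorm p y := by
  have himg : {t | ∃ x, p x ≤ 1 ∧ t = ⟪x, y⟫}
      = (fun x => ⟪x, y⟫) '' {x | p x ≤ 1} := by
    ext t; constructor
    · rintro ⟨x, hx, rfl⟩; exact ⟨x, hx, rfl⟩
    · rintro ⟨x, hx, rfl⟩; exact ⟨x, hx, rfl⟩
  have hcpt : IsCompact ((fun x => ⟪x, y⟫) '' {x | p x ≤ 1}) :=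
    (ball_compact p hp 1).image (continuous_id.inner continuous_const)
  have hne : ((fun x => ⟪x, y⟫) '' {x | p x ≤ 1}).Nonempty :=
    ⟨⟪(0:EuclideanSpace ℝ (Fin d)), y⟫, 0, by simp, rfl⟩
  have hmem := hcpt.sSup_mem hne
  have hbdd := hcpt.bddAbove
  rw [dualNorm, himg]
  constructor
  · obtain ⟨x, hx, hxe⟩ := hmem
    exact ⟨x, hx, hxe.symm⟩
  · intro x hx
    exact le_csSup hbdd ⟨x, hx, rfl⟩

lemma pairing_le {d : ℕ} (p : Seminorm ℝ (EuclideanSpace ℝ (Fin d)))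
    (hp : ∀ x, p x = 0 → x = 0) (y Δ : EuclideanSpace ℝ (Fin d)) {δ : ℝ}
    (hδ : 0 < δ) (hΔ : p Δ ≤ δ) : ⟪Δ, y⟫ ≤ δ * dualNorm p y := by
  have hmem : p (δ⁻¹ • Δ) ≤ 1 := by
    rw [map_smul_eq_mul]
    rw [Real.norm_eq_abs, abs_of_pos (inv_pos.mpr hδ)]
    rw [inv_mul_le_iff₀ hδ, mul_one]
    exact hΔ
  have := (dn_isMax p hp y).2 _ hmem
  have h2 : ⟪δ⁻¹ • Δ, y⟫ = δ⁻¹ * ⟪Δ, y⟫ := real_inner_smul_left _ _ _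
  rw [h2] at this
  calc ⟪Δ, y⟫ = δ * (δ⁻¹ * ⟪Δ, y⟫) := by field_simp
    _ ≤ δ * dualNorm p y := mul_le_mul_of_nonneg_left this hδ.le

lemma pairing_max {d : ℕ} (p : Seminorm ℝ (EuclideanSpace ℝ (Fin d)))
    (hp : ∀ x, p x = 0 → x = 0) (y : EuclideanSpace ℝ (Fin d)) {δ : ℝ}
    (hδ : 0 < δ) : ∃ Δ, p Δ ≤ δ ∧ ⟪Δ, y⟫ = δ * dualNorm p y := by
  obtain ⟨x, hx, hxe⟩ := (dn_isMax p hp y).1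
  refine ⟨δ • x, ?_, ?_⟩
  · rw [map_smul_eq_mul, Real.norm_eq_abs, abs_of_pos hδ]
    calc δ * p x ≤ δ * 1 := mul_le_mul_of_nonneg_left hx hδ.le
      _ = δ := mul_one δ
  · rw [real_inner_smul_left, ← hxe]

lemma fderiv_eq_toDual {d : ℕ} (h : EuclideanSpace ℝ (Fin d) → ℝ)
    (z : EuclideanSpace ℝ (Fin d)) :
    fderiv ℝ h z = InnerProductSpace.toDual ℝ _ (gradient h z) := by
  rw [gradient, LinearIsometryEquiv.apply_symm_apply]

lemma taylor_unif {d : ℕ} (h : EuclideanSpace ℝ (Fin d) → ℝ)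
    (hdiff : Differentiable ℝ h) (hucont : UniformContinuous (gradient h)) :
    ∀ ε > 0, ∃ r > 0, ∀ z Δ : EuclideanSpace ℝ (Fin d), ‖Δ‖ < r →
      |h (z + Δ) - h z - ⟪gradient h z, Δ⟫| ≤ ε * ‖Δ‖ := by
  intro ε hε
  obtain ⟨r, hr, hball⟩ := Metric.uniformContinuous_iff.mp hucont ε hε
  refine ⟨r, hr, fun z Δ hΔ => ?_⟩
  have key := Convex.norm_image_sub_le_of_norm_hasFDerivWithin_le'
    (f := h) (f' := fun u => fderiv ℝ h u) (φ := fderiv ℝ h z)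
    (s := Metric.closedBall z ‖Δ‖) (C := ε) (x := z) (y := z + Δ)
    (fun u _ => (hdiff u).hasFDerivAt.hasFDerivWithinAt)
    (fun u hu => by
      have hd : dist u z < r := lt_of_le_of_lt (Metric.mem_closedBall.mp hu) hΔ
      have := hball hd
      show ‖fderiv ℝ h u - _‖ ≤ ε
      rw [fderiv_eq_toDual h, fderiv_eq_toDual h, ← map_sub]
      rw [LinearIsometryEquiv.norm_map]
      rw [dist_eq_norm] at this
      exact this.le)
    (convex_closedBall z ‖Δ‖)
    (Metric.mem_closedBall_self (norm_nonneg Δ))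
    (by simp [Metric.mem_closedBall, dist_eq_norm])
  have happ : fderiv ℝ h z (z + Δ - z) = ⟪gradient h z, Δ⟫ := by
    rw [add_sub_cancel_left, fderiv_eq_toDual h, InnerProductSpace.toDual_apply_apply]
  rw [happ] at key
  simpa [Real.norm_eq_abs, add_sub_cancel_left] using key

/-- First-order regularization effect of adversarial training: the worst-case increase of `h`
over a `p`-ball of radius `δ` equals `δ` times the dual norm of the gradient, up to an `o(δ)`
error, uniformly in the base point; and in particular the pointwise one-sided limit holds. -/
theorem stmt0 {d : ℕ} (p : Seminorm ℝ (EuclideanSpace ℝ (Fin d)))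
    (hp : ∀ x, p x = 0 → x = 0)
    (h : EuclideanSpace ℝ (Fin d) → ℝ)
    (hdiff : Differentiable ℝ h)
    (hucont : UniformContinuous (gradient h)) :
    (∀ ε > 0, ∃ δ₀ > 0, ∀ δ : ℝ, 0 < δ → δ < δ₀ → ∀ z,
      |sSup {t | ∃ Δ, p Δ ≤ δ ∧ t = h (z + Δ)} - h z - δ * dualNorm p (gradient h z)| ≤ ε * δ)
    ∧ ∀ z, Tendsto
        (fun δ : ℝ => (sSup {t | ∃ Δ, p Δ ≤ δ ∧ t = h (z + Δ)} - h z) / δ)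
        (nhdsWithin 0 (Set.Ioi 0)) (nhds (dualNorm p (gradient h z))) := by
  obtain ⟨c, hc, hcle⟩ := pnorm_ge p hp
  have key : ∀ ε > 0, ∃ δ₀ > 0, ∀ δ : ℝ, 0 < δ → δ < δ₀ → ∀ z,
      |sSup {t | ∃ Δ, p Δ ≤ δ ∧ t = h (z + Δ)} - h z - δ * dualNorm p (gradient h z)| ≤ ε * δ := by
    intro ε hε
    obtain ⟨r, hr, htay⟩ := taylor_unif h hdiff hucont (ε * c) (by positivity)
    refine ⟨r * c, by positivity, fun δ hδ hδ₀ z => ?_⟩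
    set D := dualNorm p (gradient h z) with hD
    set S := {t | ∃ Δ, p Δ ≤ δ ∧ t = h (z + Δ)} with hS
    -- norm bound on elements of the p-ball
    have hnormΔ : ∀ Δ : EuclideanSpace ℝ (Fin d), p Δ ≤ δ → ‖Δ‖ < r := by
      intro Δ hΔ
      have h1 : c * ‖Δ‖ ≤ δ := (hcle Δ).trans hΔ
      have h2 : c * ‖Δ‖ < r * c := h1.trans_lt hδ₀
      nlinarith
    have htayΔ : ∀ Δ : EuclideanSpace ℝ (Fin d), p Δ ≤ δ →
        |h (z + Δ) - h z - ⟪gradient h z, Δ⟫| ≤ ε * δ := by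
      intro Δ hΔ
      have h1 := htay z Δ (hnormΔ Δ hΔ)
      have h2 : c * ‖Δ‖ ≤ δ := (hcle Δ).trans hΔ
      calc |h (z + Δ) - h z - ⟪gradient h z, Δ⟫| ≤ ε * c * ‖Δ‖ := h1
        _ = ε * (c * ‖Δ‖) := by ring
        _ ≤ ε * δ := mul_le_mul_of_nonneg_left h2 hε.le
    -- upper bound for every element of S
    have hub : ∀ t ∈ S, t ≤ h z + δ * D + ε * δ := by
      rintro t ⟨Δ, hΔ, rfl⟩
      have h1 := htayΔ Δ hΔ
      have h2 : ⟪Δ, gradient h z⟫ ≤ δ * D := pairing_le p hp _ _ hδ hΔ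
      rw [real_inner_comm] at h2
      have h3 := (abs_le.mp h1).2
      linarith
    have hne : S.Nonempty := ⟨h (z + 0), 0, by simp [map_zero p, hδ.le], rfl⟩
    have hbdd : BddAbove S := ⟨h z + δ * D + ε * δ, hub⟩
    have hsup_le : sSup S ≤ h z + δ * D + ε * δ := csSup_le hne hub
    -- lower bound
    obtain ⟨Δ', hΔ', hinner'⟩ := pairing_max p hp (gradient h z) hδ
    have hmem' : h (z + Δ') ∈ S := ⟨Δ', hΔ', rfl⟩
    have h1 := (abs_le.mp (htayΔ Δ' hΔ')).1
    rw [real_inner_comm] at hinner'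
    have hlow : h z + δ * D - ε * δ ≤ sSup S := by
      have := le_csSup hbdd hmem'
      rw [hinner'] at h1
      linarith
    rw [abs_le]
    constructor <;> linarith
  refine ⟨key, fun z => ?_⟩
  rw [Metric.tendsto_nhdsWithin_nhds]
  intro ε hε
  obtain ⟨δ₀, hδ₀, hkey⟩ := key (ε / 2) (by positivity)
  refine ⟨δ₀, hδ₀, fun δ hδ hdist => ?_⟩
  have hδpos : (0:ℝ) < δ := hδ
  have hδlt : δ < δ₀ := by
    rw [Real.dist_eq, sub_zero, abs_of_pos hδpos] at hdist
    exact hdist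
  have := hkey δ hδpos hδlt z
  rw [Real.dist_eq]
  have heq : (sSup {t | ∃ Δ, p Δ ≤ δ ∧ t = h (z + Δ)} - h z) / δ - dualNorm p (gradient h z)
      = (sSup {t | ∃ Δ, p Δ ≤ δ ∧ t = h (z + Δ)} - h z - δ * dualNorm p (gradient h z)) / δ := by
    field_simp
  rw [heq, abs_div, abs_of_pos hδpos, div_lt_iff₀ hδpos]
  calc |sSup {t | ∃ Δ, p Δ ≤ δ ∧ t = h (z + Δ)} - h z - δ * dualNorm p (gradient h z)|
      ≤ ε / 2 * δ := this
    _ < ε * δ := by nlinarith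
end

section
/- Let L(f, y) be convex and lower-semicontinuous in its first argument f ∈ ℝ. Then for any norm ‖·‖ on ℝ^d, any x, β ∈ ℝ^d, y ∈ ℝ, and δ ≥ 0: max_{‖Δ‖ ≤ δ} L(⟨x+Δ, β⟩, y) = max{ L(⟨x,β⟩ + δ‖β‖_*, y), L(⟨x,β⟩ − δ‖β‖_*, y) }, where ‖·‖_* is the dual norm. -/
open RealInnerProductSpace

section aux

variable {d : ℕ} (p : Seminorm ℝ (EuclideanSpace ℝ (Fin d)))

/-- Upper bound: `p x ≤ C * ‖x‖`. -/
lemma seminorm_le_const : ∃ C, 0 ≤ C ∧ ∀ x, p x ≤ C * ‖x‖ := by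
  classical
  refine ⟨∑ i, p (EuclideanSpace.single i (1:ℝ)), Finset.sum_nonneg fun i _ => apply_nonneg _ _,
    fun x => ?_⟩
  have hx : x = ∑ i, x i • EuclideanSpace.single i (1:ℝ) := by
    have := (EuclideanSpace.basisFun (Fin d) ℝ).sum_repr x
    simpa [EuclideanSpace.basisFun_apply, EuclideanSpace.basisFun_repr] using this.symm
  have habs : ∀ i, |x i| ≤ ‖x‖ := by
    intro i
    have h := abs_real_inner_le_norm (EuclideanSpace.single i (1:ℝ)) x
    simpa [EuclideanSpace.inner_single_left] using h
  calc p x = p (∑ i, x i • EuclideanSpace.single i (1:ℝ)) := by rw [← hx]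
    _ ≤ ∑ i, p (x i • EuclideanSpace.single i (1:ℝ)) :=
        Finset.le_sum_of_subadditive p (map_zero p).le (map_add_le_add p) _ _
    _ ≤ ∑ i, ‖x‖ * p (EuclideanSpace.single i (1:ℝ)) := by
        refine Finset.sum_le_sum fun i _ => ?_
        rw [map_smul_eq_mul, Real.norm_eq_abs]
        exact mul_le_mul_of_nonneg_right (habs i) (apply_nonneg _ _)
    _ = (∑ i, p (EuclideanSpace.single i (1:ℝ))) * ‖x‖ := by
        rw [Finset.sum_mul]
        exact Finset.sum_congr rfl fun i _ => mul_comm _ _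
lemma seminorm_continuous : Continuous p := by
  obtain ⟨C, hC0, hC⟩ := seminorm_le_const p
  have h : ∀ a b : EuclideanSpace ℝ (Fin d), |p a - p b| ≤ C * ‖a - b‖ := fun a b =>
    (abs_sub_map_le_sub p a b).trans (hC _)
  have : LipschitzWith (Real.toNNReal C) p := by
    refine LipschitzWith.of_dist_le_mul fun a b => ?_
    simp only [Real.dist_eq, dist_eq_norm]
    rw [Real.coe_toNNReal C hC0]
    exact h a b
  exact this.continuous

lemma seminorm_ge_const (hp : ∀ v, p v = 0 → v = 0) :
    ∃ c, 0 < c ∧ ∀ x, c * ‖x‖ ≤ p x := by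
  by_cases hd : ∃ v : EuclideanSpace ℝ (Fin d), v ≠ 0
  · have hcomp : IsCompact (Metric.sphere (0 : EuclideanSpace ℝ (Fin d)) 1) :=
      isCompact_sphere 0 1
    obtain ⟨v0, hv0⟩ := hd
    have hne : (Metric.sphere (0 : EuclideanSpace ℝ (Fin d)) 1).Nonempty := by
      refine ⟨‖v0‖⁻¹ • v0, ?_⟩
      simp [norm_smul, abs_of_nonneg, inv_mul_cancel₀ (norm_ne_zero_iff.mpr hv0)]
    obtain ⟨z, hz, hzmin⟩ := hcomp.exists_isMinOn hne (seminorm_continuous p).continuousOn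
    have hz0 : z ≠ 0 := by
      intro h; rw [h] at hz; simp at hz
    have hpz : 0 < p z := by
      rcases (apply_nonneg p z).lt_or_eq with h | h
      · exact h
      · exact absurd (hp z h.symm) hz0
    refine ⟨p z, hpz, fun x => ?_⟩
    rcases eq_or_ne x 0 with rfl | hx
    · simp
    · have hxs : ‖x‖⁻¹ • x ∈ Metric.sphere (0 : EuclideanSpace ℝ (Fin d)) 1 := by
        simp [norm_smul, abs_of_nonneg, inv_mul_cancel₀ (norm_ne_zero_iff.mpr hx)]
      have := hzmin hxs
      have hps : p z ≤ ‖x‖⁻¹ * p x := by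
        simpa [map_smul_eq_mul, abs_of_nonneg (inv_nonneg.mpr (norm_nonneg x))] using this
      have hxn : 0 < ‖x‖ := norm_pos_iff.mpr hx
      calc p z * ‖x‖ ≤ (‖x‖⁻¹ * p x) * ‖x‖ := by gcongr
        _ = p x := by field_simp
  · refine ⟨1, one_pos, fun x => ?_⟩
    push_neg at hd
    simp [hd x]

lemma dualNorm_bddAbove (hp : ∀ v, p v = 0 → v = 0) (β : EuclideanSpace ℝ (Fin d)) :
    BddAbove {t | ∃ x, p x ≤ 1 ∧ t = ⟪x, β⟫} := by
  obtain ⟨c, hc, hcl⟩ := seminorm_ge_const p hp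
  refine ⟨c⁻¹ * ‖β‖, fun t ht => ?_⟩
  obtain ⟨x, hx, rfl⟩ := ht
  have hxn : ‖x‖ ≤ c⁻¹ := by
    have h1 : c * ‖x‖ ≤ 1 := (hcl x).trans hx
    calc ‖x‖ = c⁻¹ * (c * ‖x‖) := by field_simp
      _ ≤ c⁻¹ * 1 := by gcongr
      _ = c⁻¹ := mul_one _
  calc ⟪x, β⟫ ≤ ‖x‖ * ‖β‖ := real_inner_le_norm x β
    _ ≤ c⁻¹ * ‖β‖ := by gcongr

lemma dualNorm_attained (hp : ∀ v, p v = 0 → v = 0) (β : EuclideanSpace ℝ (Fin d)) :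
    ∃ v, p v ≤ 1 ∧ ⟪v, β⟫ = dualNorm p β := by
  obtain ⟨c, hc, hcl⟩ := seminorm_ge_const p hp
  have hS : IsCompact {x : EuclideanSpace ℝ (Fin d) | p x ≤ 1} := by
    have hclosed : IsClosed {x : EuclideanSpace ℝ (Fin d) | p x ≤ 1} :=
      isClosed_le (seminorm_continuous p) continuous_const
    have hbdd : Bornology.IsBounded {x : EuclideanSpace ℝ (Fin d) | p x ≤ 1} := by
      refine (Metric.isBounded_iff_subset_closedBall 0).mpr ⟨c⁻¹, fun x hx => ?_⟩
      simp only [Metric.mem_closedBall, dist_zero_right]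
      have h1 : c * ‖x‖ ≤ 1 := (hcl x).trans hx
      calc ‖x‖ = c⁻¹ * (c * ‖x‖) := by field_simp
        _ ≤ c⁻¹ * 1 := by gcongr
        _ = c⁻¹ := mul_one _
    exact Metric.isCompact_of_isClosed_isBounded hclosed hbdd
  have hne : {x : EuclideanSpace ℝ (Fin d) | p x ≤ 1}.Nonempty := ⟨0, by simp⟩
  have himg : IsCompact ((fun x => ⟪x, β⟫) '' {x | p x ≤ 1}) :=
    hS.image (Continuous.inner continuous_id continuous_const)
  have himgne : ((fun x => ⟪x, β⟫) '' {x | p x ≤ 1}).Nonempty := hne.image _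
  have hset : {t | ∃ x, p x ≤ 1 ∧ t = ⟪x, β⟫} = (fun x => ⟪x, β⟫) '' {x | p x ≤ 1} := by
    ext t; constructor
    · rintro ⟨x, hx, rfl⟩; exact ⟨x, hx, rfl⟩
    · rintro ⟨x, hx, rfl⟩; exact ⟨x, hx, rfl⟩
  have := himg.sSup_mem himgne
  rw [dualNorm, hset]
  obtain ⟨v, hv, hveq⟩ := this
  exact ⟨v, hv, hveq⟩

end aux

/-- Tractable reformulation of adversarial training with a linear predictor (Ribeiro et al.,
Theorem 4): for `L` convex and lower semicontinuous in its first argument,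
`max_{‖Δ‖ ≤ δ} L(⟨x+Δ, β⟩, y) = max { L(⟨x,β⟩ + δ‖β‖₊, y), L(⟨x,β⟩ − δ‖β‖₊, y) }`,
where `‖·‖₊` is the dual norm. -/
theorem stmt3 {d : ℕ} (p : Seminorm ℝ (EuclideanSpace ℝ (Fin d)))
    (hp : ∀ v, p v = 0 → v = 0)
    (L : ℝ → ℝ → ℝ) (y : ℝ)
    (hconv : ConvexOn ℝ Set.univ (fun f => L f y))
    (hlsc : LowerSemicontinuous (fun f => L f y))
    (x β : EuclideanSpace ℝ (Fin d)) (δ : ℝ) (hδ : 0 ≤ δ) :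
    IsGreatest {t | ∃ Δ, p Δ ≤ δ ∧ t = L (⟪x + Δ, β⟫) y}
      (max (L (⟪x, β⟫ + δ * dualNorm p β) y) (L (⟪x, β⟫ - δ * dualNorm p β) y)) := by
  obtain ⟨v, hv1, hveq⟩ := dualNorm_attained p hp β
  have hbdd := dualNorm_bddAbove p hp β
  have hd0 : 0 ≤ dualNorm p β := by
    have : (0:ℝ) ∈ {t | ∃ x, p x ≤ 1 ∧ t = ⟪x, β⟫} := ⟨0, by simp, by simp⟩
    exact le_csSup hbdd this
  set s := δ * dualNorm p β with hs
  have hs0 : 0 ≤ s := mul_nonneg hδ hd0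
  -- membership of the two extreme values
  have hmemP : L (⟪x, β⟫ + s) y ∈ {t | ∃ Δ, p Δ ≤ δ ∧ t = L (⟪x + Δ, β⟫) y} := by
    refine ⟨δ • v, ?_, ?_⟩
    · rw [map_smul_eq_mul, Real.norm_eq_abs, abs_of_nonneg hδ]
      calc δ * p v ≤ δ * 1 := by gcongr
        _ = δ := mul_one δ
    · rw [inner_add_left, real_inner_smul_left, hveq]
  have hmemM : L (⟪x, β⟫ - s) y ∈ {t | ∃ Δ, p Δ ≤ δ ∧ t = L (⟪x + Δ, β⟫) y} := by
    refine ⟨(-δ) • v, ?_, ?_⟩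
    · rw [map_smul_eq_mul, Real.norm_eq_abs, abs_neg, abs_of_nonneg hδ]
      calc δ * p v ≤ δ * 1 := by gcongr
        _ = δ := mul_one δ
    · rw [inner_add_left, real_inner_smul_left, hveq]; ring_nf; rw [hs]
  constructor
  · rcases max_cases (L (⟪x, β⟫ + s) y) (L (⟪x, β⟫ - s) y) with ⟨h, _⟩ | ⟨h, _⟩
    · rw [h]; exact hmemP
    · rw [h]; exact hmemM
  · rintro t ⟨Δ, hΔ, rfl⟩
    have hinner : |⟪Δ, β⟫| ≤ s := by
      have key : ∀ w : EuclideanSpace ℝ (Fin d), p w ≤ δ → ⟪w, β⟫ ≤ s := by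
        intro w hw
        rcases hδ.lt_or_eq with hδpos | hδ0
        · have : p (δ⁻¹ • w) ≤ 1 := by
            rw [map_smul_eq_mul, Real.norm_eq_abs, abs_of_nonneg (inv_nonneg.mpr hδ)]
            rw [inv_mul_le_iff₀ hδpos, mul_one]
            exact hw
          have hle : ⟪δ⁻¹ • w, β⟫ ≤ dualNorm p β := le_csSup hbdd ⟨δ⁻¹ • w, this, rfl⟩
          rw [real_inner_smul_left] at hle
          calc ⟪w, β⟫ = δ * (δ⁻¹ * ⟪w, β⟫) := by field_simp
            _ ≤ δ * dualNorm p β := by gcongr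
        · have : p w = 0 := le_antisymm (hδ0 ▸ hw) (apply_nonneg _ _)
          rw [hp w this]
          simp [hs, ← hδ0]
      rw [abs_le]
      constructor
      · have := key (-Δ) (by rwa [map_neg_eq_map])
        rw [inner_neg_left] at this
        linarith
      · exact key Δ hΔ
    rw [inner_add_left]
    have hseg : ⟪x, β⟫ + ⟪Δ, β⟫ ∈ segment ℝ (⟪x, β⟫ + s) (⟪x, β⟫ - s) := by
      rw [segment_symm, segment_eq_Icc (by linarith : ⟪x, β⟫ - s ≤ ⟪x, β⟫ + s)]
      rw [abs_le] at hinner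
      constructor <;> [linarith; linarith]
    have := hconv.le_on_segment (Set.mem_univ (⟪x, β⟫ + s)) (Set.mem_univ (⟪x, β⟫ - s)) hseg
    exact this
end

section
/- Let L(f, y) be convex and lower-semicontinuous in its first argument, let w ∈ ℝ^d have all components nonzero, and let w ⊗ Δ denote componentwise product. Then for any norm ‖·‖, any x, β ∈ ℝ^d, y ∈ ℝ, and δ ≥ 0: max_{‖w ⊗ Δ‖ ≤ δ} L(⟨x+Δ, β⟩, y) = max_{s ∈ {−1,1}} L(⟨x,β⟩ + δ·s·‖w⁻¹ ⊗ β‖_*, y), where w⁻¹ = (1/w₁, …, 1/w_d). -/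
/-- Type synonym of `Fin d → ℝ` to carry the norm `p`. -/
private def VSyn (d : ℕ) : Type := Fin d → ℝ

instance {d : ℕ} : AddCommGroup (VSyn d) := Pi.addCommGroup
noncomputable instance {d : ℕ} : Module ℝ (VSyn d) := Pi.module _ _ _
instance {d : ℕ} : FiniteDimensional ℝ (VSyn d) :=
  inferInstanceAs (FiniteDimensional ℝ (Fin d → ℝ))

private lemma dual_exists_max {d : ℕ} (p : Seminorm ℝ (Fin d → ℝ))
    (hp : ∀ v, p v = 0 → v = 0) (v : Fin d → ℝ) :
    ∃ u : Fin d → ℝ, p u ≤ 1 ∧ ∀ u', p u' ≤ 1 →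
      ∑ j, u' j * v j ≤ ∑ j, u j * v j := by
  letI : NormedAddCommGroup (VSyn d) := AddGroupNorm.toNormedAddCommGroup
    { toFun := fun u => p u
      map_zero' := map_zero p
      add_le' := fun a b => map_add_le_add p a b
      neg' := fun a => map_neg_eq_map p a
      eq_zero_of_map_eq_zero' := fun u h => hp u h }
  letI : NormedSpace ℝ (VSyn d) := ⟨fun c u => by
    change p (c • u) ≤ ‖c‖ * p u
    exact (map_smul_eq_mul p c u).le⟩
  let f : VSyn d →ₗ[ℝ] ℝ :=
    { toFun := fun u => ∑ j, u j * v j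
      map_add' := fun a b => by
        show ∑ j, (a j + b j) * v j = ∑ j, a j * v j + ∑ j, b j * v j
        simp [add_mul, Finset.sum_add_distrib]
      map_smul' := fun c a => by
        show ∑ j, (c * a j) * v j = c * ∑ j, a j * v j
        simp [Finset.mul_sum, mul_assoc] }
  have hcomp : IsCompact (Metric.closedBall (0 : VSyn d) 1) :=
    isCompact_closedBall 0 1
  have hne : (Metric.closedBall (0 : VSyn d) 1).Nonempty :=
    ⟨0, Metric.mem_closedBall_self zero_le_one⟩
  obtain ⟨u, hu, hmax⟩ := hcomp.exists_isMaxOn hne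
    f.continuous_of_finiteDimensional.continuousOn
  refine ⟨u, ?_, fun u' hu' => hmax ?_⟩
  · have h : ‖u‖ ≤ 1 := by simpa [Metric.mem_closedBall, dist_zero_right] using hu
    exact h
  · exact Metric.mem_closedBall.2 ((dist_zero_right (show VSyn d from u')).le.trans hu')

noncomputable def dualNorm' {d : ℕ} (p : Seminorm ℝ (Fin d → ℝ)) (v : Fin d → ℝ) : ℝ :=
  sSup {t | ∃ x : Fin d → ℝ, p x ≤ 1 ∧ t = ∑ j, x j * v j}

private lemma dualNorm'_isGreatest {d : ℕ} (p : Seminorm ℝ (Fin d → ℝ))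
    (hp : ∀ v, p v = 0 → v = 0) (v : Fin d → ℝ) :
    IsGreatest {t | ∃ x : Fin d → ℝ, p x ≤ 1 ∧ t = ∑ j, x j * v j} (dualNorm' p v) := by
  obtain ⟨u, hu, hmax⟩ := dual_exists_max p hp v
  have hg : IsGreatest {t | ∃ x : Fin d → ℝ, p x ≤ 1 ∧ t = ∑ j, x j * v j}
      (∑ j, u j * v j) := ⟨⟨u, hu, rfl⟩, by rintro t ⟨x, hx, rfl⟩; exact hmax x hx⟩
  have : dualNorm' p v = ∑ j, u j * v j := hg.csSup_eq
  rw [this]; exact hg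

private lemma dualNorm'_nonneg {d : ℕ} (p : Seminorm ℝ (Fin d → ℝ))
    (hp : ∀ v, p v = 0 → v = 0) (v : Fin d → ℝ) : 0 ≤ dualNorm' p v :=
  (dualNorm'_isGreatest p hp v).2 ⟨0, by simp⟩

private lemma sum_le_dual {d : ℕ} (p : Seminorm ℝ (Fin d → ℝ))
    (hp : ∀ v, p v = 0 → v = 0) (v u : Fin d → ℝ) :
    ∑ j, u j * v j ≤ p u * dualNorm' p v := by
  rcases eq_or_lt_of_le (apply_nonneg p u) with h | h
  · have : u = 0 := hp u h.symm
    simp [this, ← h]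
  · have h1 : p ((p u)⁻¹ • u) ≤ 1 := by
      rw [map_smul_eq_mul, Real.norm_eq_abs, abs_of_nonneg (inv_nonneg.2 h.le), inv_mul_cancel₀ h.ne']
    have h2 : ∑ j, ((p u)⁻¹ • u) j * v j ≤ dualNorm' p v :=
      (dualNorm'_isGreatest p hp v).2 ⟨_, h1, rfl⟩
    have h3 : ∑ j, ((p u)⁻¹ • u) j * v j = (p u)⁻¹ * ∑ j, u j * v j := by
      simp [Finset.mul_sum, mul_assoc]
    rw [h3] at h2
    calc ∑ j, u j * v j = p u * ((p u)⁻¹ * ∑ j, u j * v j) := by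
          field_simp
      _ ≤ p u * dualNorm' p v := by
          exact mul_le_mul_of_nonneg_left h2 h.le

/-- Tractable reformulation of adaptive (weighted) adversarial training: for `L` convex and
lower semicontinuous in its first argument and a weight vector `w` with nonzero entries,
`max_{‖w ⊗ Δ‖ ≤ δ} L(⟨x+Δ, β⟩, y) = max_{s ∈ {−1,1}} L(⟨x,β⟩ + δ·s·‖w⁻¹ ⊗ β‖₊, y)`. -/
theorem stmt4 {d : ℕ} (p : Seminorm ℝ (Fin d → ℝ)) (hp : ∀ v, p v = 0 → v = 0)
    (L : ℝ → ℝ → ℝ) (y : ℝ)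
    (hconv : ConvexOn ℝ Set.univ (fun f => L f y))
    (hlsc : LowerSemicontinuous (fun f => L f y))
    (w : Fin d → ℝ) (hw : ∀ j, w j ≠ 0)
    (x β : Fin d → ℝ) (δ : ℝ) (hδ : 0 ≤ δ) :
    IsGreatest {t | ∃ Δ : Fin d → ℝ, p (fun j => w j * Δ j) ≤ δ ∧
        t = L (∑ j, (x j + Δ j) * β j) y}
      (max (L ((∑ j, x j * β j) + δ * dualNorm' p (fun j => β j / w j)) y)
           (L ((∑ j, x j * β j) - δ * dualNorm' p (fun j => β j / w j)) y)) := by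
  set v : Fin d → ℝ := fun j => β j / w j with hv
  set D : ℝ := dualNorm' p v with hD
  set a : ℝ := ∑ j, x j * β j with ha
  have hD0 : 0 ≤ D := dualNorm'_nonneg p hp v
  obtain ⟨u, hu, hmax⟩ := dual_exists_max p hp v
  have hDeq : D = ∑ j, u j * v j := by
    have hg : IsGreatest {t | ∃ x : Fin d → ℝ, p x ≤ 1 ∧ t = ∑ j, x j * v j}
        (∑ j, u j * v j) := ⟨⟨u, hu, rfl⟩, by rintro t ⟨x, hx, rfl⟩; exact hmax x hx⟩
    exact hg.csSup_eq
  -- witnesses for the endpoints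
  have hwit : ∀ s : ℝ, |s| = 1 → ∃ Δ : Fin d → ℝ, p (fun j => w j * Δ j) ≤ δ ∧
      (∑ j, (x j + Δ j) * β j) = a + s * δ * D := by
    intro s hs
    refine ⟨fun j => s * δ * u j / w j, ?_, ?_⟩
    · have : (fun j => w j * (s * δ * u j / w j)) = (s * δ) • u := by
        funext j; field_simp [hw j]; rfl
      rw [this, map_smul_eq_mul, Real.norm_eq_abs, abs_mul, hs, one_mul, abs_of_nonneg hδ]
      calc δ * p u ≤ δ * 1 := mul_le_mul_of_nonneg_left hu hδ
        _ = δ := mul_one δ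
    · have hterm : ∀ j, (x j + s * δ * u j / w j) * β j
          = x j * β j + (s * δ) * (u j * v j) := by
        intro j; rw [hv]; field_simp [hw j]
      calc (∑ j, (x j + s * δ * u j / w j) * β j)
          = ∑ j, (x j * β j + (s * δ) * (u j * v j)) :=
            Finset.sum_congr rfl (fun j _ => hterm j)
        _ = a + (s * δ) * ∑ j, u j * v j := by
            rw [Finset.sum_add_distrib, ← Finset.mul_sum, ha]
        _ = a + s * δ * D := by rw [hDeq]
  constructor
  · rcases le_total (L (a - δ * D) y) (L (a + δ * D) y) with h | h
    · rw [max_eq_left h]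
      obtain ⟨Δ, h1, h2⟩ := hwit 1 (by norm_num)
      have h3 : (∑ j, (x j + Δ j) * β j) = a + δ * D := by rw [h2]; ring
      exact ⟨Δ, h1, by rw [h3]⟩
    · rw [max_eq_right h]
      obtain ⟨Δ, h1, h2⟩ := hwit (-1) (by norm_num)
      have h3 : (∑ j, (x j + Δ j) * β j) = a - δ * D := by rw [h2]; ring
      exact ⟨Δ, h1, by rw [h3]⟩
  · rintro t ⟨Δ, hΔ, rfl⟩
    set c : ℝ := ∑ j, Δ j * β j with hc
    have hsum : (∑ j, (x j + Δ j) * β j) = a + c := by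
      rw [ha, hc, ← Finset.sum_add_distrib]; congr 1; funext j; ring
    have hcv : ∀ s : ℝ, |s| = 1 → s * c ≤ δ * D := by
      intro s hs
      have h1 : s * c = ∑ j, (s • fun j => w j * Δ j) j * v j := by
        rw [hc, Finset.mul_sum]; congr 1; funext j
        show s * (Δ j * β j) = s * (w j * Δ j) * v j
        rw [hv]; field_simp [hw j]
      have h2 := sum_le_dual p hp v (s • fun j => w j * Δ j)
      rw [← h1] at h2
      rw [map_smul_eq_mul, Real.norm_eq_abs, hs, one_mul] at h2
      exact h2.trans (mul_le_mul_of_nonneg_right hΔ hD0)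
    have hcu : c ≤ δ * D := by simpa using hcv 1 (by norm_num)
    have hcl : -(δ * D) ≤ c := by
      have := hcv (-1) (by norm_num); linarith
    have hseg : a + c ∈ segment ℝ (a - δ * D) (a + δ * D) := by
      rw [segment_eq_Icc (by linarith [mul_nonneg hδ hD0])]
      constructor <;> [linarith; linarith]
    rw [hsum]
    have := hconv.le_on_segment (Set.mem_univ (a - δ * D)) (Set.mem_univ (a + δ * D)) hseg
    simpa [max_comm] using this
end

section
/- Let V_n : ℝ^d → ℝ be a sequence of (random) convex functions and V : ℝ^d → ℝ a convex function with a unique minimizer u*. If V_n converges to V in the sense of finite-dimensional distributions (pointwise convergence in distribution, jointly on finite sets), and each V_n has a minimizer u_n, then u_n converges in distribution to u*. In the deterministic case: if convex functions V_n converge pointwise to a convex V with unique minimizer u*, and u_n minimizes V_n, and the sequence (u_n) is bounded, then u_n → u*. -/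
open Filter

/-- Key lower-semicontinuity-via-convexity step: if the values of the minimizers along a
subsequence converge to `u`, then `Vlim u ≤ Vlim ustar`. -/
lemma stmt18_key {d : ℕ} (V : ℕ → (Fin d → ℝ) → ℝ) (Vlim : (Fin d → ℝ) → ℝ)
    (hconv : ∀ n, ConvexOn ℝ Set.univ (V n))
    (hpt : ∀ u, Filter.Tendsto (fun n => V n u) atTop (nhds (Vlim u)))
    (ustar : Fin d → ℝ)
    (useq : ℕ → Fin d → ℝ)
    (hseq : ∀ n u, V n (useq n) ≤ V n u)
    (u : Fin d → ℝ) (hcont : ContinuousAt Vlim u)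
    (ψ : ℕ → ℕ) (hψ : Filter.Tendsto ψ atTop atTop)
    (hu : Filter.Tendsto (fun k => useq (ψ k)) atTop (nhds u)) :
    Vlim u ≤ Vlim ustar := by
  refine le_of_forall_pos_le_add fun ε hε => ?_
  have hε4 : (0:ℝ) < ε / 4 := by linarith
  -- continuity of Vlim at u
  obtain ⟨δ, hδ, hδ'⟩ := Metric.continuousAt_iff.mp hcont (ε / 4) hε4
  set r := δ / 2 with hr
  have hrpos : 0 < r := by positivity
  -- vertices of the cube of half-side r around u
  set T : Set (Fin d → ℝ) := Set.pi Set.univ (fun i => {u i - r, u i + r}) with hT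
  have hTfin : T.Finite := Set.Finite.pi fun i => (Set.finite_singleton _).insert _
  have hTval : ∀ v ∈ T, Vlim v < Vlim u + ε / 4 := by
    intro v hv
    have hdist : dist v u ≤ r := by
      rw [dist_pi_le_iff hrpos.le]
      intro i
      rcases hv i (Set.mem_univ i) with h | h
      · rw [Real.dist_eq, h, sub_sub_cancel_left, abs_neg, abs_of_nonneg hrpos.le]
      · rw [Set.mem_singleton_iff] at h
        rw [Real.dist_eq, h, add_sub_cancel_left, abs_of_nonneg hrpos.le]
    have : dist v u < δ := lt_of_le_of_lt hdist (by rw [hr]; linarith)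
    have := hδ' this
    have := abs_lt.mp (by simpa [Real.dist_eq] using this)
    linarith [this.2]
  -- the closed ball of radius r is inside the convex hull of T
  have hball : Metric.closedBall u r ⊆ convexHull ℝ T := by
    intro w hw
    rw [Metric.mem_closedBall, dist_pi_le_iff hrpos.le] at hw
    have : w ∈ convexHull ℝ (Set.pi Set.univ (fun i => {u i - r, u i + r})) := by
      apply mem_convexHull_pi
      intro i _
      rw [convexHull_pair, segment_eq_Icc (by linarith)]
      have := hw i
      rw [Real.dist_eq, abs_le] at this
      constructor <;> linarith [this.1, this.2]
    exact this
  -- eventual estimates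
  have E1 : ∀ᶠ n in atTop, ∀ v ∈ T, V n v < Vlim u + ε / 4 := by
    rw [eventually_all_finite hTfin]
    intro v hv
    exact (hpt v).eventually_lt_const (hTval v hv)
  have E2 : ∀ᶠ n in atTop, Vlim u - ε / 4 < V n u :=
    (hpt u).eventually_const_lt (by linarith)
  have E3 : ∀ᶠ n in atTop, V n ustar < Vlim ustar + ε / 4 :=
    (hpt ustar).eventually_lt_const (by linarith)
  have E4 : ∀ᶠ k in atTop, dist (useq (ψ k)) u ≤ r :=
    hu.eventually (Metric.eventually_nhds_iff_ball.mpr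
      ⟨r, hrpos, fun y hy => (Metric.mem_ball.mp hy).le⟩)
  obtain ⟨k, hE, h4⟩ := ((hψ.eventually (E1.and (E2.and E3))).and E4).exists
  obtain ⟨h1, h2, h3⟩ := hE
  set n := ψ k with hn
  set w := useq n with hw
  set z : Fin d → ℝ := (2 : ℝ) • u - w with hz
  have hzball : z ∈ Metric.closedBall u r := by
    rw [Metric.mem_closedBall]
    have hzu : z - u = u - w := by
      funext i
      show (2:ℝ) * u i - w i - u i = u i - w i
      ring
    calc dist z u = ‖z - u‖ := dist_eq_norm z u
      _ = ‖u - w‖ := by rw [hzu]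
      _ = dist w u := by rw [← dist_eq_norm, dist_comm]
      _ ≤ r := h4
  obtain ⟨v, hvT, hvz⟩ := (hconv n).exists_ge_of_mem_convexHull
    (Set.subset_univ T) (hball hzball)
  have hVz : V n z < Vlim u + ε / 4 := lt_of_le_of_lt hvz (h1 v hvT)
  -- midpoint convexity: u = ½ w + ½ z
  have hmid : u = (1/2 : ℝ) • w + (1/2 : ℝ) • z := by
    funext i
    show u i = (1/2:ℝ) * w i + (1/2:ℝ) * ((2:ℝ) * u i - w i)
    ring
  have hcvx : V n u ≤ (1/2) * V n w + (1/2) * V n z := by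
    have := (hconv n).2 (Set.mem_univ w) (Set.mem_univ z)
      (by norm_num : (0:ℝ) ≤ 1/2) (by norm_num : (0:ℝ) ≤ 1/2) (by norm_num)
    rw [hmid]
    simpa [smul_eq_mul] using this
  have hVw : Vlim u - 3 * (ε / 4) < V n w := by linarith
  have := hseq n ustar
  linarith

/-- Argmin continuity for convex functions (deterministic version of the
Geyer / Fu–Knight epi-convergence argument): if convex `Vₙ → V` pointwise, `V` is convex with
unique minimizer `u*`, `uₙ` minimizes `Vₙ`, and `(uₙ)` is bounded, then `uₙ → u*`. -/
theorem stmt18 {d : ℕ} (V : ℕ → (Fin d → ℝ) → ℝ) (Vlim : (Fin d → ℝ) → ℝ)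
    (hconv : ∀ n, ConvexOn ℝ Set.univ (V n))
    (hconvlim : ConvexOn ℝ Set.univ Vlim)
    (hpt : ∀ u, Tendsto (fun n => V n u) atTop (nhds (Vlim u)))
    (ustar : Fin d → ℝ)
    (hmin : ∀ u, Vlim ustar ≤ Vlim u)
    (huniq : ∀ u, (∀ v, Vlim u ≤ Vlim v) → u = ustar)
    (useq : ℕ → Fin d → ℝ)
    (hseq : ∀ n u, V n (useq n) ≤ V n u)
    (hbdd : ∃ C, ∀ n, ‖useq n‖ ≤ C) :
    Tendsto useq atTop (nhds ustar) := by
  obtain ⟨C, hC⟩ := hbdd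
  have hVlimcont : Continuous Vlim :=
    continuousOn_univ.mp (hconvlim.continuousOn isOpen_univ)
  apply tendsto_of_subseq_tendsto
  intro ns hns
  have hmem : ∀ k, useq (ns k) ∈ Metric.closedBall (0 : Fin d → ℝ) C := by
    intro k
    rw [Metric.mem_closedBall, dist_zero_right]
    exact hC (ns k)
  obtain ⟨a, _, φ, hφ, ha⟩ :=
    tendsto_subseq_of_bounded Metric.isBounded_closedBall hmem
  have hψ : Tendsto (ns ∘ φ) atTop atTop := hns.comp hφ.tendsto_atTop
  have hkey : Vlim a ≤ Vlim ustar :=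
    stmt18_key V Vlim hconv hpt ustar useq hseq a (hVlimcont.continuousAt)
      (ns ∘ φ) hψ ha
  have : a = ustar := huniq a fun v => le_trans hkey (hmin v)
  exact ⟨φ, this ▸ ha⟩
end
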